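/- arXiv:1310.7332 — 4 statements merged into one kernel-verified Lean document; each statement's English description precedes it below -/
import Mathlib

section
/- Assume λ₂c₁ - λ₁c₂ < 0, and define I_D(x) = |(λ₁+λ₂)x - (λ₂c₁-λ₁c₂)|/(c₁+c₂) for x ∈ [-c₂, c₁] and I_D(x) = ∞ otherwise. Then inf{x · I_D(1/x) : x > 0} = λ₁/c₁, and the infimum is attained at x = 1/c₁. -/
open ENNReal

noncomputable def ID (l1 l2 c1 c2 : ℝ) (x : ℝ) : ℝ≥0∞ :=
  if x ∈ Set.Icc (-c2) c1 then
    ENNReal.ofReal (|(l1 + l2) * x - (l2 * c1 - l1 * c2)| / (c1 + c2))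
  else ⊤

theorem damped_telegraph_lundberg_exponent
    (l1 l2 c1 c2 : ℝ) (hl1 : 0 < l1) (hl2 : 0 < l2) (hc1 : 0 < c1) (hc2 : 0 < c2)
    (hstab : l2 * c1 - l1 * c2 < 0) :
    sInf {z : ℝ≥0∞ | ∃ x : ℝ, 0 < x ∧ z = ENNReal.ofReal x * ID l1 l2 c1 c2 (1 / x)} =
        ENNReal.ofReal (l1 / c1) ∧
      ENNReal.ofReal (1 / c1) * ID l1 l2 c1 c2 (1 / (1 / c1)) = ENNReal.ofReal (l1 / c1) := by
  have hc12 : 0 < c1 + c2 := by linarith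
  have hmem : (c1 : ℝ) ∈ Set.Icc (-c2) c1 := ⟨by linarith, le_refl _⟩
  have hval : ENNReal.ofReal (1 / c1) * ID l1 l2 c1 c2 (1 / (1 / c1)) =
      ENNReal.ofReal (l1 / c1) := by
    have h1 : 1 / (1 / c1) = c1 := one_div_one_div c1
    rw [h1, ID, if_pos hmem, ← ENNReal.ofReal_mul (by positivity)]
    congr 1
    have habs : |(l1 + l2) * c1 - (l2 * c1 - l1 * c2)| = l1 * (c1 + c2) := by
      rw [abs_of_pos (by nlinarith)]; ring
    rw [habs]
    field_simp
  refine ⟨?_, hval⟩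
  apply le_antisymm
  · exact sInf_le ⟨1 / c1, by positivity, hval.symm⟩
  · apply le_sInf
    rintro z ⟨x, hx, rfl⟩
    by_cases hmx : (1 : ℝ) / x ∈ Set.Icc (-c2) c1
    · rw [ID, if_pos hmx, ← ENNReal.ofReal_mul hx.le]
      apply ENNReal.ofReal_le_ofReal
      have hxc : 1 ≤ c1 * x := by
        have := hmx.2
        rw [div_le_iff₀ hx] at this
        linarith
      have habs : |(l1 + l2) * (1 / x) - (l2 * c1 - l1 * c2)|
          = (l1 + l2) * (1 / x) - (l2 * c1 - l1 * c2) := by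
        apply abs_of_pos
        have : 0 < (l1 + l2) * (1 / x) := by positivity
        linarith
      rw [habs]
      rw [div_le_iff₀ hc1, mul_comm x _, mul_assoc, div_mul_eq_mul_div, le_div_iff₀ hc12]
      have h2 : ((l1 + l2) * (1 / x) - (l2 * c1 - l1 * c2)) * (x * c1)
          = (l1 + l2) * c1 - (l2 * c1 - l1 * c2) * (c1 * x) := by
        field_simp
      rw [h2]
      nlinarith [mul_le_mul_of_nonneg_left hxc (by linarith : (0:ℝ) ≤ l1 * c2 - l2 * c1)]
    · rw [ID, if_neg hmx, ENNReal.mul_top]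
      · exact le_top
      · simpa [ENNReal.ofReal_eq_zero] using hx
end

section
/- Define I_D(x) = |(λ₁+λ₂)x - (λ₂c₁-λ₁c₂)|/(c₁+c₂) and I_S(x) = (√(λ₁(x+c₂)/(c₁+c₂)) − √(λ₂(c₁−x)/(c₁+c₂)))² for x ∈ [-c₂, c₁]. Then I_D(x) ≥ I_S(x) for all x ∈ [-c₂, c₁], with strict inequality for every x ∈ (-c₂, c₁) with x ≠ (λ₂c₁-λ₁c₂)/(λ₁+λ₂). -/
lemma key_le (a b : ℝ) (ha : 0 ≤ a) (hb : 0 ≤ b) :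
    (Real.sqrt a - Real.sqrt b) ^ 2 ≤ |a - b| := by
  have ea : Real.sqrt a ^ 2 = a := Real.sq_sqrt ha
  have eb : Real.sqrt b ^ 2 = b := Real.sq_sqrt hb
  have hsa := Real.sqrt_nonneg a
  have hsb := Real.sqrt_nonneg b
  have hfac : |a - b| = |Real.sqrt a - Real.sqrt b| * (Real.sqrt a + Real.sqrt b) := by
    rw [← abs_of_nonneg (add_nonneg hsa hsb), ← abs_mul]
    congr 1
    nlinarith [ea, eb]
  have habs : |Real.sqrt a - Real.sqrt b| ≤ Real.sqrt a + Real.sqrt b :=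
    abs_le.mpr ⟨by linarith, by linarith⟩
  calc (Real.sqrt a - Real.sqrt b) ^ 2 = |Real.sqrt a - Real.sqrt b| * |Real.sqrt a - Real.sqrt b| := by
        rw [← abs_mul, ← sq, abs_of_nonneg (sq_nonneg _)]
    _ ≤ |Real.sqrt a - Real.sqrt b| * (Real.sqrt a + Real.sqrt b) :=
        mul_le_mul_of_nonneg_left habs (abs_nonneg _)
    _ = |a - b| := hfac.symm

lemma key_lt (a b : ℝ) (ha : 0 < a) (hb : 0 < b) (hab : a ≠ b) :
    (Real.sqrt a - Real.sqrt b) ^ 2 < |a - b| := by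
  have ea : Real.sqrt a ^ 2 = a := Real.sq_sqrt ha.le
  have eb : Real.sqrt b ^ 2 = b := Real.sq_sqrt hb.le
  have hsa : 0 < Real.sqrt a := Real.sqrt_pos.mpr ha
  have hsb : 0 < Real.sqrt b := Real.sqrt_pos.mpr hb
  have hne : Real.sqrt a ≠ Real.sqrt b := by
    intro h
    apply hab
    rw [← ea, ← eb, h]
  have hfac : |a - b| = |Real.sqrt a - Real.sqrt b| * (Real.sqrt a + Real.sqrt b) := by
    rw [← abs_of_nonneg (add_nonneg hsa.le hsb.le), ← abs_mul]
    congr 1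
    nlinarith [ea, eb]
  have habs : |Real.sqrt a - Real.sqrt b| < Real.sqrt a + Real.sqrt b :=
    abs_lt.mpr ⟨by linarith, by linarith⟩
  have hpos : 0 < |Real.sqrt a - Real.sqrt b| := abs_pos.mpr (sub_ne_zero.mpr hne)
  calc (Real.sqrt a - Real.sqrt b) ^ 2 = |Real.sqrt a - Real.sqrt b| * |Real.sqrt a - Real.sqrt b| := by
        rw [← abs_mul, ← sq, abs_of_nonneg (sq_nonneg _)]
    _ < |Real.sqrt a - Real.sqrt b| * (Real.sqrt a + Real.sqrt b) :=
        mul_lt_mul_of_pos_left habs hpos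
    _ = |a - b| := hfac.symm

theorem damped_dominates_standard_rate
    (l1 l2 c1 c2 : ℝ) (hl1 : 0 < l1) (hl2 : 0 < l2) (hc1 : 0 < c1) (hc2 : 0 < c2) :
    (∀ x ∈ Set.Icc (-c2) c1,
      (Real.sqrt (l1 * (x + c2) / (c1 + c2)) - Real.sqrt (l2 * (c1 - x) / (c1 + c2))) ^ 2 ≤
        |(l1 + l2) * x - (l2 * c1 - l1 * c2)| / (c1 + c2)) ∧
      ∀ x ∈ Set.Ioo (-c2) c1, x ≠ (l2 * c1 - l1 * c2) / (l1 + l2) →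
        (Real.sqrt (l1 * (x + c2) / (c1 + c2)) - Real.sqrt (l2 * (c1 - x) / (c1 + c2))) ^ 2 <
          |(l1 + l2) * x - (l2 * c1 - l1 * c2)| / (c1 + c2) := by
  have hc : (0:ℝ) < c1 + c2 := by linarith
  have habsrw : ∀ x : ℝ, |(l1 + l2) * x - (l2 * c1 - l1 * c2)| / (c1 + c2)
      = |l1 * (x + c2) / (c1 + c2) - l2 * (c1 - x) / (c1 + c2)| := by
    intro x
    rw [div_sub_div_same, abs_div, abs_of_pos hc]
    congr 1
    ring_nf
  constructor
  · intro x hx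
    rw [habsrw]
    exact key_le _ _ (div_nonneg (mul_nonneg hl1.le (by linarith [hx.1])) hc.le)
      (div_nonneg (mul_nonneg hl2.le (by linarith [hx.2])) hc.le)
  · intro x hx hne
    rw [habsrw]
    have h1 : 0 < l1 * (x + c2) / (c1 + c2) :=
      div_pos (mul_pos hl1 (by linarith [hx.1])) hc
    have h2 : 0 < l2 * (c1 - x) / (c1 + c2) :=
      div_pos (mul_pos hl2 (by linarith [hx.2])) hc
    apply key_lt _ _ h1 h2
    intro h
    apply hne
    field_simp
    have : l1 * (x + c2) = l2 * (c1 - x) := by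
      field_simp at h
      nlinarith [h]
    linarith [this]
end

section
/- Assume λ₂c₁ - λ₁c₂ < 0, and define I_S(x) = (√(λ₁(x+c₂)/(c₁+c₂)) − √(λ₂(c₁−x)/(c₁+c₂)))² for x ∈ [-c₂, c₁] and I_S(x) = ∞ otherwise. Then inf{x · I_S(1/x) : x > 0} = (λ₁c₂ - λ₂c₁)/(c₁c₂). -/
open ENNReal

noncomputable def IS (l1 l2 c1 c2 : ℝ) (x : ℝ) : ℝ≥0∞ :=
  if x ∈ Set.Icc (-c2) c1 then
    ENNReal.ofReal ((Real.sqrt (l1 * (x + c2) / (c1 + c2)) -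
      Real.sqrt (l2 * (c1 - x) / (c1 + c2))) ^ 2)
  else ⊤

set_option maxHeartbeats 1000000 in
private lemma telegraph_lb (l1 l2 c1 c2 x : ℝ) (hl1 : 0 < l1) (hl2 : 0 < l2)
    (hc1 : 0 < c1) (hc2 : 0 < c2)
    (hD : 0 < l1 * c2 - l2 * c1) (hx : 0 < x) (hcx : 1 ≤ c1 * x) :
    (l1 * c2 - l2 * c1) / (c1 * c2) ≤
      x * (Real.sqrt (l1 * (1/x + c2) / (c1 + c2)) -
        Real.sqrt (l2 * (c1 - 1/x) / (c1 + c2))) ^ 2 := by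
  have hx' : x ≠ 0 := ne_of_gt hx
  have hcc : 0 < c1 + c2 := by linarith
  set a := l1 * (1/x + c2) / (c1 + c2) with ha
  set b := l2 * (c1 - 1/x) / (c1 + c2) with hb
  have hinv : 1/x ≤ c1 := by
    rw [div_le_iff₀ hx]; linarith [mul_comm c1 x]
  have hainv : (0:ℝ) < 1/x := by positivity
  have hann : 0 ≤ a := by
    apply div_nonneg _ hcc.le
    have : 0 ≤ 1/x + c2 := by linarith
    positivity
  have hbnn : 0 ≤ b := by
    apply div_nonneg _ hcc.le
    have : 0 ≤ c1 - 1/x := by linarith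
    positivity
  set u := Real.sqrt a with hu
  set v := Real.sqrt b with hv
  have hu2 : u ^ 2 = a := Real.sq_sqrt hann
  have hv2 : v ^ 2 = b := Real.sq_sqrt hbnn
  have hun : 0 ≤ u := Real.sqrt_nonneg _
  have hvn : 0 ≤ v := Real.sqrt_nonneg _
  have hxa : x * a = l1 * (1 + c2 * x) / (c1 + c2) := by
    rw [ha]; field_simp
  have hxb : x * b = l2 * (c1 * x - 1) / (c1 + c2) := by
    rw [hb]; field_simp
  set p := l1 * (1 + c2 * x) / (c1 + c2) with hp
  set q := l2 * (c1 * x - 1) / (c1 + c2) with hq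
  have hs : 0 ≤ p + q - (l1 * c2 - l2 * c1) / (c1 * c2) := by
    rw [hp, hq, ← add_div, sub_nonneg, div_le_div_iff₀ (by positivity) hcc]
    nlinarith [mul_le_mul_of_nonneg_left hcx (by positivity : (0:ℝ) ≤ l1*c2^2),
      mul_pos (mul_pos hl2 hc1) hc1,
      mul_pos (mul_pos (mul_pos hl2 hc1) hc1) (mul_pos hc2 hx)]
  set K := (l1 * c2 - l2 * c1) / (c1 * c2) with hK
  have hsq : (2*x*(u*v))^2 = 4*(p*q) := by
    have : (2*x*(u*v))^2 = 4*((x*(u^2))*(x*(v^2))) := by ring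
    rw [this, hu2, hv2, hxa, hxb]
  have hkey : 4*(p*q) ≤ (p + q - K)^2 := by
    have hexp : (p + q - K)^2 - 4*(p*q)
        = (((l1*c2 - l2*c1)*(c1*c2)*x - (l1*c2^2 + l2*c1^2))/(c1*c2*(c1+c2)))^2 := by
      rw [hp, hq, hK]; field_simp; ring
    nlinarith [sq_nonneg (((l1*c2 - l2*c1)*(c1*c2)*x - (l1*c2^2 + l2*c1^2))/(c1*c2*(c1+c2)))]
  have huv : 2*x*(u*v) ≤ p + q - K := by
    nlinarith [mul_nonneg (mul_nonneg hx.le hun) hvn, hs, hsq, hkey]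
  have hexpand : x * (u - v)^2 = x*(u^2) + x*(v^2) - 2*x*(u*v) := by ring
  rw [hexpand, hu2, hv2, hxa, hxb]
  linarith

set_option maxHeartbeats 1000000 in
theorem standard_telegraph_lundberg_exponent
    (l1 l2 c1 c2 : ℝ) (hl1 : 0 < l1) (hl2 : 0 < l2) (hc1 : 0 < c1) (hc2 : 0 < c2)
    (hstab : l2 * c1 - l1 * c2 < 0) :
    sInf {z : ℝ≥0∞ | ∃ x : ℝ, 0 < x ∧ z = ENNReal.ofReal x * IS l1 l2 c1 c2 (1 / x)} =
      ENNReal.ofReal ((l1 * c2 - l2 * c1) / (c1 * c2)) := by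
  have hD : 0 < l1 * c2 - l2 * c1 := by linarith
  set D := l1 * c2 - l2 * c1 with hDdef
  set N := l1 * c2^2 + l2 * c1^2 with hN
  have hNpos : 0 < N := by positivity
  apply le_antisymm
  · -- sInf ≤ value : witness xs
    apply sInf_le
    set xs := N / (c1 * c2 * D) with hxs
    have hxsp : 0 < xs := by positivity
    refine ⟨xs, hxsp, ?_⟩
    have hinv : 1 / xs = c1 * c2 * D / N := by rw [hxs, one_div_div]
    have hmem : 1 / xs ∈ Set.Icc (-c2) c1 := by
      constructor
      · have : (0:ℝ) < 1 / xs := by positivity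
        linarith
      · rw [hinv, div_le_iff₀ hNpos]
        nlinarith [mul_pos (mul_pos hl2 hc1) hc1, mul_pos hc1 hc2]
    rw [IS, if_pos hmem, ← ENNReal.ofReal_mul hxsp.le]
    congr 1
    have ha : l1 * (1/xs + c2) / (c1 + c2) = (l1*c2)^2 / N := by
      rw [hinv]; field_simp; ring
    have hb : l2 * (c1 - 1/xs) / (c1 + c2) = (l2*c1)^2 / N := by
      rw [hinv]; field_simp; ring
    have hsa : Real.sqrt ((l1*c2)^2 / N) = l1*c2 / Real.sqrt N := by
      rw [Real.sqrt_div (by positivity), Real.sqrt_sq (by positivity)]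
    have hsb : Real.sqrt ((l2*c1)^2 / N) = l2*c1 / Real.sqrt N := by
      rw [Real.sqrt_div (by positivity), Real.sqrt_sq (by positivity)]
    rw [ha, hb, hsa, hsb, div_sub_div_same, div_pow, Real.sq_sqrt hNpos.le, hxs]
    field_simp
    ring
  · -- value ≤ every element
    apply le_sInf
    rintro z ⟨x, hx, rfl⟩
    by_cases hmem : 1 / x ∈ Set.Icc (-c2) c1
    · rw [IS, if_pos hmem, ← ENNReal.ofReal_mul hx.le]
      apply ENNReal.ofReal_le_ofReal
      have hcx : 1 ≤ c1 * x := by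
        have h2 := hmem.2
        rw [div_le_iff₀ hx] at h2
        linarith [mul_comm c1 x]
      exact telegraph_lb l1 l2 c1 c2 x hl1 hl2 hc1 hc2 hD hx hcx
    · rw [IS, if_neg hmem, ENNReal.mul_top]
      · exact le_top
      · simp [ENNReal.ofReal_eq_zero, not_le, hx]
end

section
/- Let α ∈ [0,1], λ₁, λ₂, c₁, c₂ > 0, t > 0, and for x ∈ (−c₂t, c₁t) set τ* = (c₂t + x)/(c₁+c₂) and p(x,t) = e^{−λ₁τ*} e^{−λ₂(t−τ*)} [λ₁+λ₂ − αλ₂ e^{−λ₁τ*} − (1−α)λ₁ e^{−λ₂(t−τ*)}] / ((c₁+c₂)[e^{−λ₂(t−τ*)} + e^{−λ₁τ*}(1 − e^{−λ₂(t−τ*)})]²). Then p(x,t) > 0 for all x ∈ (−c₂t, c₁t), and αe^{−λ₁t} + (1−α)e^{−λ₂t} + ∫_{−c₂t}^{c₁t} p(x,t) dx = 1. -/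
set_option maxHeartbeats 1000000


noncomputable def pDensity (α l1 l2 c1 c2 t x : ℝ) : ℝ :=
  let τ := (c2 * t + x) / (c1 + c2)
  Real.exp (-l1 * τ) * Real.exp (-l2 * (t - τ)) *
      (l1 + l2 - α * l2 * Real.exp (-l1 * τ) - (1 - α) * l1 * Real.exp (-l2 * (t - τ))) /
    ((c1 + c2) * (Real.exp (-l2 * (t - τ)) +
      Real.exp (-l1 * τ) * (1 - Real.exp (-l2 * (t - τ)))) ^ 2)

theorem damped_telegraph_distribution
    (α l1 l2 c1 c2 t : ℝ) (hα : α ∈ Set.Icc (0 : ℝ) 1)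
    (hl1 : 0 < l1) (hl2 : 0 < l2) (hc1 : 0 < c1) (hc2 : 0 < c2) (ht : 0 < t) :
    (∀ x ∈ Set.Ioo (-c2 * t) (c1 * t), 0 < pDensity α l1 l2 c1 c2 t x) ∧
      α * Real.exp (-l1 * t) + (1 - α) * Real.exp (-l2 * t) +
        ∫ x in (-c2 * t)..(c1 * t), pDensity α l1 l2 c1 c2 t x = 1 := by
  obtain ⟨hα0, hα1⟩ := hα
  have hs : (0:ℝ) < c1 + c2 := by linarith
  have hab : -c2 * t ≤ c1 * t := by nlinarith
  -- bounds on u, v on the closed interval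
  have huv : ∀ x ∈ Set.Icc (-c2 * t) (c1 * t),
      Real.exp (-l1 * ((c2 * t + x) / (c1 + c2))) ≤ 1 ∧
      Real.exp (-l2 * (t - (c2 * t + x) / (c1 + c2))) ≤ 1 := by
    intro x hx
    obtain ⟨hx1, hx2⟩ := hx
    have hτ0 : 0 ≤ (c2 * t + x) / (c1 + c2) := by
      apply div_nonneg _ hs.le; nlinarith
    have hτt : (c2 * t + x) / (c1 + c2) ≤ t := by
      rw [div_le_iff₀ hs]; nlinarith
    constructor
    · apply Real.exp_le_one_iff.mpr; nlinarith
    · apply Real.exp_le_one_iff.mpr; nlinarith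
  -- denominator positivity on closed interval
  have hD : ∀ x ∈ Set.Icc (-c2 * t) (c1 * t),
      0 < Real.exp (-l2 * (t - (c2 * t + x) / (c1 + c2))) +
        Real.exp (-l1 * ((c2 * t + x) / (c1 + c2))) *
          (1 - Real.exp (-l2 * (t - (c2 * t + x) / (c1 + c2)))) := by
    intro x hx
    obtain ⟨hu1, hv1⟩ := huv x hx
    have hupos := Real.exp_pos (-l1 * ((c2 * t + x) / (c1 + c2)))
    have hvpos := Real.exp_pos (-l2 * (t - (c2 * t + x) / (c1 + c2)))
    nlinarith
  -- positivity of the density on the open interval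
  have hpos : ∀ x ∈ Set.Ioo (-c2 * t) (c1 * t), 0 < pDensity α l1 l2 c1 c2 t x := by
    intro x hx
    obtain ⟨hx1, hx2⟩ := hx
    have hτ0 : 0 < (c2 * t + x) / (c1 + c2) := by
      apply div_pos _ hs; nlinarith
    have hτt : (c2 * t + x) / (c1 + c2) < t := by
      rw [div_lt_iff₀ hs]; nlinarith
    set τ := (c2 * t + x) / (c1 + c2) with hτ
    have hu1 : Real.exp (-l1 * τ) < 1 := by
      apply Real.exp_lt_one_iff.mpr; nlinarith
    have hv1 : Real.exp (-l2 * (t - τ)) < 1 := by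
      apply Real.exp_lt_one_iff.mpr; nlinarith
    have hupos := Real.exp_pos (-l1 * τ)
    have hvpos := Real.exp_pos (-l2 * (t - τ))
    have hk : 0 < α * l1 + (1 - α) * l2 := by
      rcases le_total l1 l2 with h | h
      · nlinarith
      · nlinarith
    have hnum : 0 < l1 + l2 - α * l2 * Real.exp (-l1 * τ) -
        (1 - α) * l1 * Real.exp (-l2 * (t - τ)) := by
      nlinarith [mul_nonneg (mul_nonneg hα0 hl2.le) (sub_pos.mpr hu1).le,
        mul_nonneg (mul_nonneg (by linarith : (0:ℝ) ≤ 1 - α) hl1.le) (sub_pos.mpr hv1).le]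
    have hden : 0 < (c1 + c2) * (Real.exp (-l2 * (t - τ)) +
        Real.exp (-l1 * τ) * (1 - Real.exp (-l2 * (t - τ)))) ^ 2 := by
      rw [hτ]; exact mul_pos hs (pow_pos (hD x ⟨hx1.le, hx2.le⟩) 2)
    have hgoal := div_pos (mul_pos (mul_pos hupos hvpos) hnum) hden
    simp only [pDensity]
    rw [← hτ]
    exact hgoal
  refine ⟨hpos, ?_⟩
  -- antiderivative
  set F : ℝ → ℝ := fun x =>
    (-α * Real.exp (-l1 * ((c2 * t + x) / (c1 + c2))) +
      (1 - α) * Real.exp (-l2 * (t - (c2 * t + x) / (c1 + c2)))) /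
    (Real.exp (-l2 * (t - (c2 * t + x) / (c1 + c2))) +
      Real.exp (-l1 * ((c2 * t + x) / (c1 + c2))) *
        (1 - Real.exp (-l2 * (t - (c2 * t + x) / (c1 + c2))))) with hF
  have hderiv : ∀ x ∈ Set.uIcc (-c2 * t) (c1 * t),
      HasDerivAt F (pDensity α l1 l2 c1 c2 t x) x := by
    intro x hx
    rw [Set.uIcc_of_le hab] at hx
    have hτ : HasDerivAt (fun y => (c2 * t + y) / (c1 + c2)) (1 / (c1 + c2)) x := by
      simpa using ((hasDerivAt_id x).const_add (c2 * t)).div_const (c1 + c2)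
    have hu : HasDerivAt (fun y => Real.exp (-l1 * ((c2 * t + y) / (c1 + c2))))
        (Real.exp (-l1 * ((c2 * t + x) / (c1 + c2))) * (-l1 * (1 / (c1 + c2)))) x :=
      (hτ.const_mul (-l1)).exp
    have hv : HasDerivAt (fun y => Real.exp (-l2 * (t - (c2 * t + y) / (c1 + c2))))
        (Real.exp (-l2 * (t - (c2 * t + x) / (c1 + c2))) * (-l2 * -(1 / (c1 + c2)))) x :=
      ((hτ.const_sub t).const_mul (-l2)).exp
    have hDx := hD x hx
    have hMain := ((hu.const_mul (-α)).add (hv.const_mul (1 - α))).div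
      (hv.add (hu.mul (hv.const_sub 1))) (ne_of_gt hDx)
    convert hMain using 1
    · rfl
    · rfl
    · rfl
    simp only [pDensity, Pi.add_apply, Pi.mul_apply]
    set u := Real.exp (-l1 * ((c2 * t + x) / (c1 + c2))) with hudef
    set v := Real.exp (-l2 * (t - (c2 * t + x) / (c1 + c2))) with hvdef
    have hDne : v + u * (1 - v) ≠ 0 := ne_of_gt hDx
    have hsne : (c1 + c2) ≠ 0 := ne_of_gt hs
    field_simp
    ring
  have hcont : ContinuousOn (fun x => pDensity α l1 l2 c1 c2 t x)
      (Set.uIcc (-c2 * t) (c1 * t)) := by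
    rw [Set.uIcc_of_le hab]
    apply ContinuousOn.div
    · fun_prop
    · fun_prop
    · intro x hx
      have h1 := hD x hx
      have : (0:ℝ) < (c1 + c2) * (Real.exp (-l2 * (t - (c2 * t + x) / (c1 + c2))) +
          Real.exp (-l1 * ((c2 * t + x) / (c1 + c2))) *
            (1 - Real.exp (-l2 * (t - (c2 * t + x) / (c1 + c2))))) ^ 2 := by positivity
      exact ne_of_gt this
  have hint : IntervalIntegrable (fun x => pDensity α l1 l2 c1 c2 t x)
      MeasureTheory.volume (-c2 * t) (c1 * t) :=
    hcont.intervalIntegrable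
  have hI := intervalIntegral.integral_eq_sub_of_hasDerivAt hderiv hint
  rw [hI]
  -- evaluate F at the endpoints
  have h1 : (c2 * t + c1 * t) / (c1 + c2) = t := by field_simp; ring
  have h2 : (c2 * t + -c2 * t) / (c1 + c2) = 0 := by field_simp; ring
  simp only [hF, h1, h2]
  simp only [sub_self, mul_zero, neg_zero, Real.exp_zero, sub_zero, mul_one]
  have e1 := Real.exp_pos (-l1 * t)
  have e2 := Real.exp_pos (-l2 * t)
  field_simp
  ring
end
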